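/- arXiv:0710.2208 — 3 statements merged into one kernel-verified Lean document; each statement's English description precedes it below -/
import Mathlib

section
/- The bracket 𝔤₋₁ ⊗ 𝔤₋₂ → 𝔤₋₃ induced by the matrix commutator is a linear isomorphism of 2-dimensional vector spaces (𝔤₋₂ being 1-dimensional and 𝔤₋₁, 𝔤₋₃ being 2-dimensional): for every nonzero r ∈ 𝔤₋₂ the map X ↦ [X, r] is a linear isomorphism 𝔤₋₁ → 𝔤₋₃. -/
set_option maxHeartbeats 1000000


open Matrix

noncomputable section

/-- The paper's 7×7 block-matrix presentation of the split Lie algebra of type G₂,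
parametrized by `A ∈ gl(2,ℝ)`, column vectors `X Y ∈ ℝ²`, row vectors `Z W ∈ (ℝ²)*`,
and scalars `r s ∈ ℝ`. -/
def g2mat (A : Matrix (Fin 2) (Fin 2) ℝ) (X Y Z W : Fin 2 → ℝ) (r s : ℝ) :
    Matrix (Fin 7) (Fin 7) ℝ :=
  !![A 0 0 + A 1 1, Z 0, Z 1, s, W 0, W 1, 0;
     X 0, A 0 0, A 0 1, -(Real.sqrt 2 * Z 1), 0, -(s / Real.sqrt 2), -W 0;
     X 1, A 1 0, A 1 1, Real.sqrt 2 * Z 0, s / Real.sqrt 2, 0, -W 1;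
     r, -(Real.sqrt 2 * X 1), Real.sqrt 2 * X 0, 0, -(Real.sqrt 2 * Z 1), Real.sqrt 2 * Z 0, s;
     Y 0, 0, r / Real.sqrt 2, -(Real.sqrt 2 * X 1), -A 0 0, -A 1 0, -Z 0;
     Y 1, -(r / Real.sqrt 2), 0, Real.sqrt 2 * X 0, -A 0 1, -A 1 1, -Z 1;
     0, -Y 0, -Y 1, r, -X 0, -X 1, -(A 0 0 + A 1 1)]

/-- The split G₂ Lie algebra 𝔤 as a set of 7×7 real matrices. -/
def g2set : Set (Matrix (Fin 7) (Fin 7) ℝ) :=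
  {M | ∃ A X Y Z W r s, M = g2mat A X Y Z W r s}

/-- The graded piece 𝔤₋₃ (parameter `Y`). -/
def gm3 (Y : Fin 2 → ℝ) : Matrix (Fin 7) (Fin 7) ℝ := g2mat 0 0 Y 0 0 0 0
/-- The graded piece 𝔤₋₂ (parameter `r`). -/
def gm2 (r : ℝ) : Matrix (Fin 7) (Fin 7) ℝ := g2mat 0 0 0 0 0 r 0
/-- The graded piece 𝔤₋₁ (parameter `X`). -/
def gm1 (X : Fin 2 → ℝ) : Matrix (Fin 7) (Fin 7) ℝ := g2mat 0 X 0 0 0 0 0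
/-- The graded piece 𝔤₀ (parameter `A`). -/
def g0m (A : Matrix (Fin 2) (Fin 2) ℝ) : Matrix (Fin 7) (Fin 7) ℝ := g2mat A 0 0 0 0 0 0
/-- The graded piece 𝔤₁ (parameter `Z`). -/
def g1m (Z : Fin 2 → ℝ) : Matrix (Fin 7) (Fin 7) ℝ := g2mat 0 0 0 Z 0 0 0
/-- The graded piece 𝔤₂ (parameter `s`). -/
def g2m (s : ℝ) : Matrix (Fin 7) (Fin 7) ℝ := g2mat 0 0 0 0 0 0 s
/-- The graded piece 𝔤₃ (parameter `W`). -/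
def g3m (W : Fin 2 → ℝ) : Matrix (Fin 7) (Fin 7) ℝ := g2mat 0 0 0 0 W 0 0

/-- The pairing B(M,N) = (1/6)·tr(MN). -/
def Bpair (M N : Matrix (Fin 7) (Fin 7) ℝ) : ℝ := (1 / 6 : ℝ) * (M * N).trace

lemma g2_bracket_gm1_gm2 (r : ℝ) (X : Fin 2 → ℝ) :
    gm1 X * gm2 r - gm2 r * gm1 X
      = gm3 ![-(3 * Real.sqrt 2 / 2 * r * X 1), 3 * Real.sqrt 2 / 2 * r * X 0] := by
  have h2 : Real.sqrt 2 ≠ 0 := by positivity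
  have hsq : Real.sqrt 2 * Real.sqrt 2 = 2 := Real.mul_self_sqrt (by norm_num)
  have hinv : (Real.sqrt 2)⁻¹ = Real.sqrt 2 / 2 := by
    rw [eq_div_iff (by norm_num : (2:ℝ) ≠ 0), inv_mul_eq_div, div_eq_iff h2]
    linarith [hsq]
  ext i j
  fin_cases i <;> fin_cases j <;>
    simp [gm1, gm2, gm3, g2mat, Matrix.mul_apply, Fin.sum_univ_seven]
  all_goals try rfl
  all_goals try exact (by ring : (0:ℝ) - 0 = (0:ℝ))
  all_goals try (rw [div_eq_mul_inv, hinv]; ring)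
  all_goals first
    | exact (by ring :
        Real.sqrt 2 * r * X 0 - Real.sqrt 2 * r * X 0 * (-1 / 2)
          = Real.sqrt 2 * r * X 0 * (3 / 2))
    | exact (by ring :
        X 1 * r * Real.sqrt 2 * (1 / 2) - -(X 1 * r * Real.sqrt 2)
          = X 1 * r * Real.sqrt 2 * (3 / 2))
    | exact (by ring :
        X 0 * r * Real.sqrt 2 * (-1 / 2) - X 0 * r * Real.sqrt 2
          = X 0 * r * Real.sqrt 2 * (-3 / 2))

/-- For every nonzero r ∈ 𝔤₋₂, the bracket X ↦ [X, r] is a linear isomorphism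
𝔤₋₁ → 𝔤₋₃. -/
theorem bracket_gm1_gm2_iso :
    ∀ r : ℝ, r ≠ 0 → ∃ T : (Fin 2 → ℝ) ≃ₗ[ℝ] (Fin 2 → ℝ),
      ∀ X : Fin 2 → ℝ, gm1 X * gm2 r - gm2 r * gm1 X = gm3 (T X) := by
  intro r hr
  have h2 : Real.sqrt 2 ≠ 0 := by positivity
  have hc : 3 * Real.sqrt 2 / 2 * r ≠ 0 := by positivity
  refine ⟨{ toFun := fun X => ![-(3 * Real.sqrt 2 / 2 * r * X 1), 3 * Real.sqrt 2 / 2 * r * X 0],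
            invFun := fun Y => ![(3 * Real.sqrt 2 / 2 * r)⁻¹ * Y 1,
                                 -((3 * Real.sqrt 2 / 2 * r)⁻¹ * Y 0)],
            map_add' := by
              intro X Y
              funext i; fin_cases i <;> simp <;> ring
            map_smul' := by
              intro c X
              funext i; fin_cases i <;> simp <;> ring
            left_inv := by
              intro X
              funext i; fin_cases i <;> simp <;> field_simp <;> ring
            right_inv := by
              intro Y
              funext i; fin_cases i <;> simp <;> field_simp <;> ring }, ?_⟩
  intro X
  exact g2_bracket_gm1_gm2 r X

end
end

section
/- The pairing B(M, N) = (1/6)·tr(MN) on the split G₂ Lie algebra 𝔤 restricts to a perfect pairing between 𝔤ᵢ and 𝔤₋ᵢ for i = 1, 2, 3, given explicitly in parameters by (X, Z) ↦ ZX, (r, s) ↦ (1/2)rs, and (Y, W) ↦ (1/3)WY. -/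
open Matrix

noncomputable section

lemma cons_val_five' {α : Type*} {m : ℕ} (x : α) (u : Fin m.succ.succ.succ.succ.succ → α) :
    vecCons x u 5 = vecHead (vecTail (vecTail (vecTail (vecTail u)))) := rfl

lemma cons_val_six' {α : Type*} {m : ℕ} (x : α) (u : Fin m.succ.succ.succ.succ.succ.succ → α) :
    vecCons x u 6 = vecHead (vecTail (vecTail (vecTail (vecTail (vecTail u))))) := rfl

lemma Bpair1 (X Z : Fin 2 → ℝ) : Bpair (gm1 X) (g1m Z) = Z 0 * X 0 + Z 1 * X 1 := by
  simp [Bpair, gm1, g1m, g2mat, Matrix.trace, Matrix.mul_apply, Fin.sum_univ_seven,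
    Matrix.diag, cons_val_five', cons_val_six']
  ring_nf
  rw [Real.sq_sqrt (by norm_num : (0:ℝ) ≤ 2)]
  ring

lemma Bpair2 (r s : ℝ) : Bpair (gm2 r) (g2m s) = (1 / 2) * (r * s) := by
  have h : Real.sqrt 2 ≠ 0 := by positivity
  simp [Bpair, gm2, g2m, g2mat, Matrix.trace, Matrix.mul_apply, Fin.sum_univ_seven,
    Matrix.diag, cons_val_five', cons_val_six']
  field_simp
  ring_nf
  rw [Real.sq_sqrt (by norm_num : (0:ℝ) ≤ 2)]
  ring

lemma Bpair3 (Y W : Fin 2 → ℝ) : Bpair (gm3 Y) (g3m W) = (1 / 3) * (W 0 * Y 0 + W 1 * Y 1) := by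
  simp [Bpair, gm3, g3m, g2mat, Matrix.trace, Matrix.mul_apply, Fin.sum_univ_seven,
    Matrix.diag, cons_val_five', cons_val_six']
  ring

/-- The pairing B(M,N) = (1/6)tr(MN) restricts to a perfect pairing between 𝔤ᵢ and 𝔤₋ᵢ
for i = 1,2,3, given in parameters by (X,Z) ↦ ZX, (r,s) ↦ (1/2)rs, (Y,W) ↦ (1/3)WY. -/
theorem B_perfect_pairings :
    (∀ X Z : Fin 2 → ℝ, Bpair (gm1 X) (g1m Z) = Z 0 * X 0 + Z 1 * X 1) ∧
    (∀ r s : ℝ, Bpair (gm2 r) (g2m s) = (1 / 2) * (r * s)) ∧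
    (∀ Y W : Fin 2 → ℝ, Bpair (gm3 Y) (g3m W) = (1 / 3) * (W 0 * Y 0 + W 1 * Y 1)) ∧
    (∀ Z : Fin 2 → ℝ, (∀ X : Fin 2 → ℝ, Bpair (gm1 X) (g1m Z) = 0) → Z = 0) ∧
    (∀ X : Fin 2 → ℝ, (∀ Z : Fin 2 → ℝ, Bpair (gm1 X) (g1m Z) = 0) → X = 0) ∧
    (∀ s : ℝ, (∀ r : ℝ, Bpair (gm2 r) (g2m s) = 0) → s = 0) ∧
    (∀ r : ℝ, (∀ s : ℝ, Bpair (gm2 r) (g2m s) = 0) → r = 0) ∧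
    (∀ W : Fin 2 → ℝ, (∀ Y : Fin 2 → ℝ, Bpair (gm3 Y) (g3m W) = 0) → W = 0) ∧
    (∀ Y : Fin 2 → ℝ, (∀ W : Fin 2 → ℝ, Bpair (gm3 Y) (g3m W) = 0) → Y = 0) := by
  refine ⟨Bpair1, Bpair2, Bpair3, ?_, ?_, ?_, ?_, ?_, ?_⟩
  · intro Z h
    funext i
    fin_cases i
    · have := h ![1, 0]; rw [Bpair1] at this; simpa using this
    · have := h ![0, 1]; rw [Bpair1] at this; simpa using this
  · intro X h
    funext i
    fin_cases i
    · have := h ![1, 0]; rw [Bpair1] at this; simpa using this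
    · have := h ![0, 1]; rw [Bpair1] at this; simpa using this
  · intro s h
    have := h 1; rw [Bpair2] at this; simpa using this
  · intro r h
    have := h 1; rw [Bpair2] at this; simpa using this
  · intro W h
    funext i
    fin_cases i
    · have := h ![1, 0]; rw [Bpair3] at this; simpa using this
    · have := h ![0, 1]; rw [Bpair3] at this; simpa using this
  · intro Y h
    funext i
    fin_cases i
    · have := h ![1, 0]; rw [Bpair3] at this; simpa using this
    · have := h ![0, 1]; rw [Bpair3] at this; simpa using this

end
end

section
/- In the split G₂ Lie algebra 𝔤 of the paper, the bracket {·,·}: 𝔤₁ × 𝔤₋₂ → 𝔤₋₁ satisfies, for every linear functional ψ ∈ 𝔤₁ ≅ (𝔤₋₁)* (identified via B) and all ξ, η ∈ 𝔤₋₁: [ψ, [ξ, η]] = 4·(ψ(ξ)·η − ψ(η)·ξ), where ψ(ξ) := B(ψ, ξ). -/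
open Matrix

noncomputable section

lemma fin7_mk_0 (h : 0 < 7) : (⟨0, h⟩ : Fin 7) = (0 : Fin 7) := rfl
lemma fin7_mk_1 (h : 1 < 7) : (⟨1, h⟩ : Fin 7) = (1 : Fin 7) := rfl
lemma fin7_mk_2 (h : 2 < 7) : (⟨2, h⟩ : Fin 7) = (2 : Fin 7) := rfl
lemma fin7_mk_3 (h : 3 < 7) : (⟨3, h⟩ : Fin 7) = (3 : Fin 7) := rfl
lemma fin7_mk_4 (h : 4 < 7) : (⟨4, h⟩ : Fin 7) = (4 : Fin 7) := rfl
lemma fin7_mk_5 (h : 5 < 7) : (⟨5, h⟩ : Fin 7) = (5 : Fin 7) := rfl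
lemma fin7_mk_6 (h : 6 < 7) : (⟨6, h⟩ : Fin 7) = (6 : Fin 7) := rfl
lemma g2mat_apply_00 (A : Matrix (Fin 2) (Fin 2) ℝ) (X Y Z W : Fin 2 → ℝ) (r s : ℝ) : g2mat A X Y Z W r s 0 0 = A 0 0 + A 1 1 := rfl
lemma g2mat_apply_01 (A : Matrix (Fin 2) (Fin 2) ℝ) (X Y Z W : Fin 2 → ℝ) (r s : ℝ) : g2mat A X Y Z W r s 0 1 = Z 0 := rfl
lemma g2mat_apply_02 (A : Matrix (Fin 2) (Fin 2) ℝ) (X Y Z W : Fin 2 → ℝ) (r s : ℝ) : g2mat A X Y Z W r s 0 2 = Z 1 := rfl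
lemma g2mat_apply_03 (A : Matrix (Fin 2) (Fin 2) ℝ) (X Y Z W : Fin 2 → ℝ) (r s : ℝ) : g2mat A X Y Z W r s 0 3 = s := rfl
lemma g2mat_apply_04 (A : Matrix (Fin 2) (Fin 2) ℝ) (X Y Z W : Fin 2 → ℝ) (r s : ℝ) : g2mat A X Y Z W r s 0 4 = W 0 := rfl
lemma g2mat_apply_05 (A : Matrix (Fin 2) (Fin 2) ℝ) (X Y Z W : Fin 2 → ℝ) (r s : ℝ) : g2mat A X Y Z W r s 0 5 = W 1 := rfl
lemma g2mat_apply_06 (A : Matrix (Fin 2) (Fin 2) ℝ) (X Y Z W : Fin 2 → ℝ) (r s : ℝ) : g2mat A X Y Z W r s 0 6 = 0 := rfl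
lemma g2mat_apply_10 (A : Matrix (Fin 2) (Fin 2) ℝ) (X Y Z W : Fin 2 → ℝ) (r s : ℝ) : g2mat A X Y Z W r s 1 0 = X 0 := rfl
lemma g2mat_apply_11 (A : Matrix (Fin 2) (Fin 2) ℝ) (X Y Z W : Fin 2 → ℝ) (r s : ℝ) : g2mat A X Y Z W r s 1 1 = A 0 0 := rfl
lemma g2mat_apply_12 (A : Matrix (Fin 2) (Fin 2) ℝ) (X Y Z W : Fin 2 → ℝ) (r s : ℝ) : g2mat A X Y Z W r s 1 2 = A 0 1 := rfl
lemma g2mat_apply_13 (A : Matrix (Fin 2) (Fin 2) ℝ) (X Y Z W : Fin 2 → ℝ) (r s : ℝ) : g2mat A X Y Z W r s 1 3 = -(Real.sqrt 2 * Z 1) := rfl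
lemma g2mat_apply_14 (A : Matrix (Fin 2) (Fin 2) ℝ) (X Y Z W : Fin 2 → ℝ) (r s : ℝ) : g2mat A X Y Z W r s 1 4 = 0 := rfl
lemma g2mat_apply_15 (A : Matrix (Fin 2) (Fin 2) ℝ) (X Y Z W : Fin 2 → ℝ) (r s : ℝ) : g2mat A X Y Z W r s 1 5 = -(s / Real.sqrt 2) := rfl
lemma g2mat_apply_16 (A : Matrix (Fin 2) (Fin 2) ℝ) (X Y Z W : Fin 2 → ℝ) (r s : ℝ) : g2mat A X Y Z W r s 1 6 = -W 0 := rfl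
lemma g2mat_apply_20 (A : Matrix (Fin 2) (Fin 2) ℝ) (X Y Z W : Fin 2 → ℝ) (r s : ℝ) : g2mat A X Y Z W r s 2 0 = X 1 := rfl
lemma g2mat_apply_21 (A : Matrix (Fin 2) (Fin 2) ℝ) (X Y Z W : Fin 2 → ℝ) (r s : ℝ) : g2mat A X Y Z W r s 2 1 = A 1 0 := rfl
lemma g2mat_apply_22 (A : Matrix (Fin 2) (Fin 2) ℝ) (X Y Z W : Fin 2 → ℝ) (r s : ℝ) : g2mat A X Y Z W r s 2 2 = A 1 1 := rfl
lemma g2mat_apply_23 (A : Matrix (Fin 2) (Fin 2) ℝ) (X Y Z W : Fin 2 → ℝ) (r s : ℝ) : g2mat A X Y Z W r s 2 3 = Real.sqrt 2 * Z 0 := rfl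
lemma g2mat_apply_24 (A : Matrix (Fin 2) (Fin 2) ℝ) (X Y Z W : Fin 2 → ℝ) (r s : ℝ) : g2mat A X Y Z W r s 2 4 = s / Real.sqrt 2 := rfl
lemma g2mat_apply_25 (A : Matrix (Fin 2) (Fin 2) ℝ) (X Y Z W : Fin 2 → ℝ) (r s : ℝ) : g2mat A X Y Z W r s 2 5 = 0 := rfl
lemma g2mat_apply_26 (A : Matrix (Fin 2) (Fin 2) ℝ) (X Y Z W : Fin 2 → ℝ) (r s : ℝ) : g2mat A X Y Z W r s 2 6 = -W 1 := rfl
lemma g2mat_apply_30 (A : Matrix (Fin 2) (Fin 2) ℝ) (X Y Z W : Fin 2 → ℝ) (r s : ℝ) : g2mat A X Y Z W r s 3 0 = r := rfl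
lemma g2mat_apply_31 (A : Matrix (Fin 2) (Fin 2) ℝ) (X Y Z W : Fin 2 → ℝ) (r s : ℝ) : g2mat A X Y Z W r s 3 1 = -(Real.sqrt 2 * X 1) := rfl
lemma g2mat_apply_32 (A : Matrix (Fin 2) (Fin 2) ℝ) (X Y Z W : Fin 2 → ℝ) (r s : ℝ) : g2mat A X Y Z W r s 3 2 = Real.sqrt 2 * X 0 := rfl
lemma g2mat_apply_33 (A : Matrix (Fin 2) (Fin 2) ℝ) (X Y Z W : Fin 2 → ℝ) (r s : ℝ) : g2mat A X Y Z W r s 3 3 = 0 := rfl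
lemma g2mat_apply_34 (A : Matrix (Fin 2) (Fin 2) ℝ) (X Y Z W : Fin 2 → ℝ) (r s : ℝ) : g2mat A X Y Z W r s 3 4 = -(Real.sqrt 2 * Z 1) := rfl
lemma g2mat_apply_35 (A : Matrix (Fin 2) (Fin 2) ℝ) (X Y Z W : Fin 2 → ℝ) (r s : ℝ) : g2mat A X Y Z W r s 3 5 = Real.sqrt 2 * Z 0 := rfl
lemma g2mat_apply_36 (A : Matrix (Fin 2) (Fin 2) ℝ) (X Y Z W : Fin 2 → ℝ) (r s : ℝ) : g2mat A X Y Z W r s 3 6 = s := rfl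
lemma g2mat_apply_40 (A : Matrix (Fin 2) (Fin 2) ℝ) (X Y Z W : Fin 2 → ℝ) (r s : ℝ) : g2mat A X Y Z W r s 4 0 = Y 0 := rfl
lemma g2mat_apply_41 (A : Matrix (Fin 2) (Fin 2) ℝ) (X Y Z W : Fin 2 → ℝ) (r s : ℝ) : g2mat A X Y Z W r s 4 1 = 0 := rfl
lemma g2mat_apply_42 (A : Matrix (Fin 2) (Fin 2) ℝ) (X Y Z W : Fin 2 → ℝ) (r s : ℝ) : g2mat A X Y Z W r s 4 2 = r / Real.sqrt 2 := rfl
lemma g2mat_apply_43 (A : Matrix (Fin 2) (Fin 2) ℝ) (X Y Z W : Fin 2 → ℝ) (r s : ℝ) : g2mat A X Y Z W r s 4 3 = -(Real.sqrt 2 * X 1) := rfl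
lemma g2mat_apply_44 (A : Matrix (Fin 2) (Fin 2) ℝ) (X Y Z W : Fin 2 → ℝ) (r s : ℝ) : g2mat A X Y Z W r s 4 4 = -A 0 0 := rfl
lemma g2mat_apply_45 (A : Matrix (Fin 2) (Fin 2) ℝ) (X Y Z W : Fin 2 → ℝ) (r s : ℝ) : g2mat A X Y Z W r s 4 5 = -A 1 0 := rfl
lemma g2mat_apply_46 (A : Matrix (Fin 2) (Fin 2) ℝ) (X Y Z W : Fin 2 → ℝ) (r s : ℝ) : g2mat A X Y Z W r s 4 6 = -Z 0 := rfl
lemma g2mat_apply_50 (A : Matrix (Fin 2) (Fin 2) ℝ) (X Y Z W : Fin 2 → ℝ) (r s : ℝ) : g2mat A X Y Z W r s 5 0 = Y 1 := rfl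
lemma g2mat_apply_51 (A : Matrix (Fin 2) (Fin 2) ℝ) (X Y Z W : Fin 2 → ℝ) (r s : ℝ) : g2mat A X Y Z W r s 5 1 = -(r / Real.sqrt 2) := rfl
lemma g2mat_apply_52 (A : Matrix (Fin 2) (Fin 2) ℝ) (X Y Z W : Fin 2 → ℝ) (r s : ℝ) : g2mat A X Y Z W r s 5 2 = 0 := rfl
lemma g2mat_apply_53 (A : Matrix (Fin 2) (Fin 2) ℝ) (X Y Z W : Fin 2 → ℝ) (r s : ℝ) : g2mat A X Y Z W r s 5 3 = Real.sqrt 2 * X 0 := rfl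
lemma g2mat_apply_54 (A : Matrix (Fin 2) (Fin 2) ℝ) (X Y Z W : Fin 2 → ℝ) (r s : ℝ) : g2mat A X Y Z W r s 5 4 = -A 0 1 := rfl
lemma g2mat_apply_55 (A : Matrix (Fin 2) (Fin 2) ℝ) (X Y Z W : Fin 2 → ℝ) (r s : ℝ) : g2mat A X Y Z W r s 5 5 = -A 1 1 := rfl
lemma g2mat_apply_56 (A : Matrix (Fin 2) (Fin 2) ℝ) (X Y Z W : Fin 2 → ℝ) (r s : ℝ) : g2mat A X Y Z W r s 5 6 = -Z 1 := rfl
lemma g2mat_apply_60 (A : Matrix (Fin 2) (Fin 2) ℝ) (X Y Z W : Fin 2 → ℝ) (r s : ℝ) : g2mat A X Y Z W r s 6 0 = 0 := rfl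
lemma g2mat_apply_61 (A : Matrix (Fin 2) (Fin 2) ℝ) (X Y Z W : Fin 2 → ℝ) (r s : ℝ) : g2mat A X Y Z W r s 6 1 = -Y 0 := rfl
lemma g2mat_apply_62 (A : Matrix (Fin 2) (Fin 2) ℝ) (X Y Z W : Fin 2 → ℝ) (r s : ℝ) : g2mat A X Y Z W r s 6 2 = -Y 1 := rfl
lemma g2mat_apply_63 (A : Matrix (Fin 2) (Fin 2) ℝ) (X Y Z W : Fin 2 → ℝ) (r s : ℝ) : g2mat A X Y Z W r s 6 3 = r := rfl
lemma g2mat_apply_64 (A : Matrix (Fin 2) (Fin 2) ℝ) (X Y Z W : Fin 2 → ℝ) (r s : ℝ) : g2mat A X Y Z W r s 6 4 = -X 0 := rfl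
lemma g2mat_apply_65 (A : Matrix (Fin 2) (Fin 2) ℝ) (X Y Z W : Fin 2 → ℝ) (r s : ℝ) : g2mat A X Y Z W r s 6 5 = -X 1 := rfl
lemma g2mat_apply_66 (A : Matrix (Fin 2) (Fin 2) ℝ) (X Y Z W : Fin 2 → ℝ) (r s : ℝ) : g2mat A X Y Z W r s 6 6 = -(A 0 0 + A 1 1) := rfl

lemma comm1 (ξ η : Fin 2 → ℝ) :
    gm1 ξ * gm1 η - gm1 η * gm1 ξ
      = gm2 (2 * Real.sqrt 2 * (ξ 0 * η 1 - ξ 1 * η 0)) := by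
  have h2 : Real.sqrt 2 * Real.sqrt 2 = 2 := Real.mul_self_sqrt (by norm_num)
  have hne : Real.sqrt 2 ≠ 0 := by positivity
  have h3 : Real.sqrt 2 * Real.sqrt 2 * Real.sqrt 2 = 2 * Real.sqrt 2 := by rw [h2]
  have h4 : Real.sqrt 2 ^ 3 = 2 * Real.sqrt 2 := by rw [pow_succ, sq, h2]
  have h5 : Real.sqrt 2 ^ 2 = 2 := by rw [sq, h2]
  have hinv : (Real.sqrt 2)⁻¹ = Real.sqrt 2 * 2⁻¹ := by
    field_simp
    exact h5.symm
  ext i j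
  fin_cases i <;> fin_cases j <;>
    simp only [gm1, gm2, g1m, Matrix.sub_apply, Matrix.mul_apply, Fin.sum_univ_seven,
      fin7_mk_0, fin7_mk_1, fin7_mk_2, fin7_mk_3, fin7_mk_4, fin7_mk_5, fin7_mk_6,
      g2mat_apply_00, g2mat_apply_01, g2mat_apply_02, g2mat_apply_03, g2mat_apply_04, g2mat_apply_05, g2mat_apply_06, g2mat_apply_10, g2mat_apply_11, g2mat_apply_12, g2mat_apply_13, g2mat_apply_14, g2mat_apply_15, g2mat_apply_16, g2mat_apply_20, g2mat_apply_21, g2mat_apply_22, g2mat_apply_23, g2mat_apply_24, g2mat_apply_25, g2mat_apply_26, g2mat_apply_30, g2mat_apply_31, g2mat_apply_32, g2mat_apply_33, g2mat_apply_34, g2mat_apply_35, g2mat_apply_36, g2mat_apply_40, g2mat_apply_41, g2mat_apply_42, g2mat_apply_43, g2mat_apply_44, g2mat_apply_45, g2mat_apply_46, g2mat_apply_50, g2mat_apply_51, g2mat_apply_52, g2mat_apply_53, g2mat_apply_54, g2mat_apply_55, g2mat_apply_56, g2mat_apply_60, g2mat_apply_61, g2mat_apply_62, g2mat_apply_63,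 g2mat_apply_64, g2mat_apply_65, g2mat_apply_66,
      Matrix.cons_val_zero, Matrix.cons_val_one, Matrix.head_cons,
      Pi.zero_apply, Matrix.zero_apply, zero_div, mul_zero, zero_mul, neg_zero,
      add_zero, zero_add, sub_zero, zero_sub, mul_one, one_mul, mul_neg, neg_neg,
      neg_mul, sub_self, sub_neg_eq_add] <;>
    (try simp only [div_eq_mul_inv, hinv]) <;>
    (ring_nf; all_goals (simp only [h4, h5]; first | rfl | ring | nlinarith [h2, h3]))

lemma comm2 (ψ : Fin 2 → ℝ) (r : ℝ) :
    g1m ψ * gm2 r - gm2 r * g1m ψ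
      = gm1 ![-(Real.sqrt 2 * r * ψ 1), Real.sqrt 2 * r * ψ 0] := by
  have h2 : Real.sqrt 2 * Real.sqrt 2 = 2 := Real.mul_self_sqrt (by norm_num)
  have hne : Real.sqrt 2 ≠ 0 := by positivity
  have h3 : Real.sqrt 2 * Real.sqrt 2 * Real.sqrt 2 = 2 * Real.sqrt 2 := by rw [h2]
  have h4 : Real.sqrt 2 ^ 3 = 2 * Real.sqrt 2 := by rw [pow_succ, sq, h2]
  have h5 : Real.sqrt 2 ^ 2 = 2 := by rw [sq, h2]
  have hinv : (Real.sqrt 2)⁻¹ = Real.sqrt 2 * 2⁻¹ := by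
    field_simp
    exact h5.symm
  ext i j
  fin_cases i <;> fin_cases j <;>
    simp only [gm1, gm2, g1m, Matrix.sub_apply, Matrix.mul_apply, Fin.sum_univ_seven,
      fin7_mk_0, fin7_mk_1, fin7_mk_2, fin7_mk_3, fin7_mk_4, fin7_mk_5, fin7_mk_6,
      g2mat_apply_00, g2mat_apply_01, g2mat_apply_02, g2mat_apply_03, g2mat_apply_04, g2mat_apply_05, g2mat_apply_06, g2mat_apply_10, g2mat_apply_11, g2mat_apply_12, g2mat_apply_13, g2mat_apply_14, g2mat_apply_15, g2mat_apply_16, g2mat_apply_20, g2mat_apply_21, g2mat_apply_22, g2mat_apply_23, g2mat_apply_24, g2mat_apply_25, g2mat_apply_26, g2mat_apply_30, g2mat_apply_31, g2mat_apply_32, g2mat_apply_33, g2mat_apply_34, g2mat_apply_35, g2mat_apply_36, g2mat_apply_40, g2mat_apply_41, g2mat_apply_42, g2mat_apply_43, g2mat_apply_44, g2mat_apply_45, g2mat_apply_46, g2mat_apply_50, g2mat_apply_51, g2mat_apply_52, g2mat_apply_53, g2mat_apply_54, g2mat_apply_55, g2mat_apply_56, g2mat_apply_60, g2mat_apply_61,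 g2mat_apply_62, g2mat_apply_63, g2mat_apply_64, g2mat_apply_65, g2mat_apply_66,
      Matrix.cons_val_zero, Matrix.cons_val_one, Matrix.head_cons,
      Pi.zero_apply, Matrix.zero_apply, zero_div, mul_zero, zero_mul, neg_zero,
      add_zero, zero_add, sub_zero, zero_sub, mul_one, one_mul, mul_neg, neg_neg,
      neg_mul, sub_self, sub_neg_eq_add] <;>
    (try simp only [div_eq_mul_inv, hinv]) <;>
    (ring_nf; all_goals (simp only [h4, h5]; first | rfl | ring | nlinarith [h2, h3]))

/-- The bracket 𝔤₁ × 𝔤₋₂ → 𝔤₋₁ satisfies [ψ,[ξ,η]] = 4(ψ(ξ)η − ψ(η)ξ), where ψ ∈ 𝔤₁ is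
identified with a linear functional on 𝔤₋₁ via ψ(ξ) = B(ψ,ξ) = ψ·ξ. -/
theorem bracket_g1_gm2_formula :
    ∀ ψ ξ η : Fin 2 → ℝ,
      g1m ψ * (gm1 ξ * gm1 η - gm1 η * gm1 ξ) -
        (gm1 ξ * gm1 η - gm1 η * gm1 ξ) * g1m ψ
          = gm1 ((4 : ℝ) •
              ((ψ 0 * ξ 0 + ψ 1 * ξ 1) • η - (ψ 0 * η 0 + ψ 1 * η 1) • ξ)) := by
  intro ψ ξ η
  have h2 : Real.sqrt 2 * Real.sqrt 2 = 2 := Real.mul_self_sqrt (by norm_num)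
  have hv : (![-(Real.sqrt 2 * (2 * Real.sqrt 2 * (ξ 0 * η 1 - ξ 1 * η 0)) * ψ 1),
        Real.sqrt 2 * (2 * Real.sqrt 2 * (ξ 0 * η 1 - ξ 1 * η 0)) * ψ 0] : Fin 2 → ℝ)
      = (4 : ℝ) • ((ψ 0 * ξ 0 + ψ 1 * ξ 1) • η - (ψ 0 * η 0 + ψ 1 * η 1) • ξ) := by
    funext i
    fin_cases i <;>
      simp only [show ((⟨0, by norm_num⟩ : Fin 2)) = (0 : Fin 2) from rfl,
        show ((⟨1, by norm_num⟩ : Fin 2)) = (1 : Fin 2) from rfl,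
        Matrix.cons_val_zero, Matrix.cons_val_one, Matrix.head_cons,
        Pi.smul_apply, Pi.sub_apply, smul_eq_mul]
    · linear_combination (-2 * (ξ 0 * η 1 - ξ 1 * η 0) * ψ 1) * h2
    · linear_combination (2 * (ξ 0 * η 1 - ξ 1 * η 0) * ψ 0) * h2
  rw [comm1, comm2, hv]

end
end
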